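/- Let S₂ = ω₂ ∩ ℤ⁴. Then the Hilbert basis of S₂ is {g₁, g₂, g₃, g₄, g₅, g₆, g₇}, where g₆ = (1, 1, 1, 0) and g₇ = (0, 1, 1, 1); that is, every element of S₂ is an ℕ-linear combination of g₁, …, g₇, and no gᵢ (1 ≤ i ≤ 7) can be written as a sum of two nonzero elements of S₂. -/
import Mathlib


/-- The seven lattice points `g₁, …, g₇` (0-indexed as `g 0, …, g 6`). -/
def g : Fin 7 → (Fin 4 → ℤ) :=
  ![![1,0,0,0], ![0,1,0,0], ![1,1,2,0], ![0,0,0,1],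
    ![0,2,2,1], ![1,1,1,0], ![0,1,1,1]]

/-- Coercion of an integer vector to a real vector. -/
def toR (v : Fin 4 → ℤ) : Fin 4 → ℝ := fun j => (v j : ℝ)

/-- The convex cone generated by a finite family of vectors in `ℝ⁴`. -/
def cone {n : ℕ} (v : Fin n → (Fin 4 → ℝ)) : Set (Fin 4 → ℝ) :=
  {x | ∃ lam : Fin n → ℝ, (∀ i, 0 ≤ lam i) ∧ x = ∑ i, lam i • v i}

/-- The cone `ω₂` generated by `g₁, …, g₅`. -/
def ω₂ : Set (Fin 4 → ℝ) := cone (fun i : Fin 5 => toR (g (Fin.castLE (by norm_num) i)))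

/-- The semigroup `S₂ = ω₂ ∩ ℤ⁴`. -/
def S₂ : Set (Fin 4 → ℤ) := {v | toR v ∈ ω₂}

lemma gcast (h : (5:ℕ) ≤ 7) (i : Fin 5) :
    g (Fin.castLE h i) = ![![1,0,0,0], ![0,1,0,0], ![1,1,2,0], ![0,0,0,1], ![0,2,2,1]] i := by
  fin_cases i <;> rfl

lemma g0v : g 0 = ![1,0,0,0] := rfl
lemma g1v : g 1 = ![0,1,0,0] := rfl
lemma g2v : g 2 = ![1,1,2,0] := rfl
lemma g3v : g 3 = ![0,0,0,1] := rfl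
lemma g4v : g 4 = ![0,2,2,1] := rfl
lemma g5v : g 5 = ![1,1,1,0] := rfl
lemma g6v : g 6 = ![0,1,1,1] := rfl

/-- H-description of `S₂`. -/
lemma mem_S₂_iff (v : Fin 4 → ℤ) :
    v ∈ S₂ ↔ 0 ≤ v 0 ∧ 0 ≤ v 2 ∧ 0 ≤ v 3 ∧ v 2 ≤ 2 * v 1 ∧ v 2 ≤ v 0 + v 1 ∧
      v 2 ≤ 2 * v 0 + 2 * v 3 := by
  constructor
  · rintro ⟨lam, hl, he⟩
    simp only [gcast] at he
    have h0 := congrFun he 0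
    have h1 := congrFun he 1
    have h2 := congrFun he 2
    have h3 := congrFun he 3
    simp [Fin.sum_univ_five, toR, Matrix.vecHead, Matrix.vecTail] at h0 h1 h2 h3
    have l0 := hl 0; have l1 := hl 1; have l2 := hl 2; have l3 := hl 3; have l4 := hl 4
    refine ⟨?_, ?_, ?_, ?_, ?_, ?_⟩
    · have : (0:ℝ) ≤ (v 0 : ℝ) := by rw [h0]; linarith
      exact_mod_cast this
    · have : (0:ℝ) ≤ (v 2 : ℝ) := by rw [h2]; linarith
      exact_mod_cast this
    · have : (0:ℝ) ≤ (v 3 : ℝ) := by rw [h3]; linarith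
      exact_mod_cast this
    · have : (v 2 : ℝ) ≤ 2 * (v 1 : ℝ) := by rw [h1, h2]; linarith
      exact_mod_cast this
    · have : (v 2 : ℝ) ≤ (v 0 : ℝ) + (v 1 : ℝ) := by rw [h0, h1, h2]; linarith
      exact_mod_cast this
    · have : (v 2 : ℝ) ≤ 2 * (v 0 : ℝ) + 2 * (v 3 : ℝ) := by rw [h0, h2, h3]; linarith
      exact_mod_cast this
  · rintro ⟨i1, i2, i3, i4, i5, i6⟩
    set L : ℝ := max 0 ((v 2 : ℝ) / 2 - v 0) with hL
    have hL0 : 0 ≤ L := le_max_left _ _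
    have hLa : (v 2 : ℝ) / 2 - v 0 ≤ L := le_max_right _ _
    have c2 : (0:ℝ) ≤ (v 2 : ℝ) := by exact_mod_cast i2
    have c1 : (0:ℝ) ≤ (v 0 : ℝ) := by exact_mod_cast i1
    have c3 : (0:ℝ) ≤ (v 3 : ℝ) := by exact_mod_cast i3
    have c4 : (v 2 : ℝ) ≤ 2 * (v 1 : ℝ) := by exact_mod_cast i4
    have c5 : (v 2 : ℝ) ≤ (v 0 : ℝ) + (v 1 : ℝ) := by exact_mod_cast i5
    have c6 : (v 2 : ℝ) ≤ 2 * (v 0 : ℝ) + 2 * (v 3 : ℝ) := by exact_mod_cast i6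
    have hL1 : L ≤ (v 2 : ℝ) / 2 := max_le (by linarith) (by linarith)
    have hL2 : L ≤ (v 1 : ℝ) - (v 2 : ℝ) / 2 := max_le (by linarith) (by linarith)
    have hL3 : L ≤ (v 3 : ℝ) := max_le (by linarith) (by linarith)
    refine ⟨![(v 0 : ℝ) - ((v 2 : ℝ) / 2 - L), (v 1 : ℝ) - (v 2 : ℝ) / 2 - L,
      (v 2 : ℝ) / 2 - L, (v 3 : ℝ) - L, L], ?_, ?_⟩
    · intro i
      fin_cases i <;> simp <;> linarith
    · simp only [gcast]
      funext j
      fin_cases j <;>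
        simp [Fin.sum_univ_five, toR, Matrix.vecHead, Matrix.vecTail] <;> ring

lemma ne_zero_comp {a : Fin 4 → ℤ} (h : a ≠ 0) :
    ¬ (a 0 = 0 ∧ a 1 = 0 ∧ a 2 = 0 ∧ a 3 = 0) := by
  rintro ⟨h0, h1, h2, h3⟩
  exact h (funext fun j => by fin_cases j <;> assumption)

theorem stmt_10 :
    (∀ i, g i ∈ S₂) ∧
    (∀ v ∈ S₂, ∃ c : Fin 7 → ℕ, v = ∑ i, c i • g i) ∧
    (∀ i : Fin 7, ¬ ∃ a ∈ S₂, ∃ b ∈ S₂, a ≠ 0 ∧ b ≠ 0 ∧ g i = a + b) := by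
  refine ⟨?_, ?_, ?_⟩
  · intro i
    rw [mem_S₂_iff]
    fin_cases i <;> decide
  · intro v hv
    rw [mem_S₂_iff] at hv
    obtain ⟨i1, i2, i3, i4, i5, i6⟩ := hv
    obtain ⟨a, b, c, d, ha, hb, hc, hd, hsum, hx, hw, hy⟩ :
        ∃ a b c d : ℤ, 0 ≤ a ∧ 0 ≤ b ∧ 0 ≤ c ∧ 0 ≤ d ∧
          2*a + b + 2*c + d = v 2 ∧ a + b ≤ v 0 ∧ c + d ≤ v 3 ∧ v 2 - v 1 ≤ a := by
      rcases le_or_gt (v 2) (2 * v 0) with h | h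
      · exact ⟨max (max 0 (v 2 - v 0)) (v 2 - v 1), v 2 - 2 * max (max 0 (v 2 - v 0)) (v 2 - v 1),
          0, 0, by omega, by omega, by omega, by omega, by omega, by omega, by omega, by omega⟩
      · exact ⟨v 0, 0, max 0 (v 2 - 2 * v 0 - v 3),
          v 2 - 2 * v 0 - 2 * max 0 (v 2 - 2 * v 0 - v 3),
          by omega, by omega, by omega, by omega, by omega, by omega, by omega, by omega⟩
    set cv : Fin 7 → ℕ := ![(v 0 - a - b).toNat, (v 1 - v 2 + a).toNat, a.toNat,
      (v 3 - c - d).toNat, c.toNat, b.toNat, d.toNat] with hcv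
    refine ⟨cv, ?_⟩
    have p0 : cv 0 = (v 0 - a - b).toNat := rfl
    have p1 : cv 1 = (v 1 - v 2 + a).toNat := rfl
    have p2 : cv 2 = a.toNat := rfl
    have p3 : cv 3 = (v 3 - c - d).toNat := rfl
    have p4 : cv 4 = c.toNat := rfl
    have p5 : cv 5 = b.toNat := rfl
    have p6 : cv 6 = d.toNat := rfl
    have e1 : ((v 0 - a - b).toNat : ℤ) = v 0 - a - b := Int.toNat_of_nonneg (by omega)
    have e2 : ((v 1 - v 2 + a).toNat : ℤ) = v 1 - v 2 + a := Int.toNat_of_nonneg (by omega)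
    have e3 : ((a.toNat : ℤ)) = a := Int.toNat_of_nonneg ha
    have e4 : ((v 3 - c - d).toNat : ℤ) = v 3 - c - d := Int.toNat_of_nonneg (by omega)
    have e5 : ((c.toNat : ℤ)) = c := Int.toNat_of_nonneg hc
    have e6 : ((b.toNat : ℤ)) = b := Int.toNat_of_nonneg hb
    have e7 : ((d.toNat : ℤ)) = d := Int.toNat_of_nonneg hd
    funext j
    fin_cases j <;>
      simp [Fin.sum_univ_seven, g0v, g1v, g2v, g3v, g4v, g5v, g6v, nsmul_eq_mul,
        p0, p1, p2, p3, p4, p5, p6, Matrix.vecHead, Matrix.vecTail] <;>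
      omega
  · intro i
    rintro ⟨a, ha, b, hb, ha0, hb0, heq⟩
    rw [mem_S₂_iff] at ha hb
    have hna := ne_zero_comp ha0
    have hnb := ne_zero_comp hb0
    fin_cases i
    · have h0 : (1:ℤ) = a 0 + b 0 := congrFun heq 0
      have h1 : (0:ℤ) = a 1 + b 1 := congrFun heq 1
      have h2 : (0:ℤ) = a 2 + b 2 := congrFun heq 2
      have h3 : (0:ℤ) = a 3 + b 3 := congrFun heq 3
      omega
    · have h0 : (0:ℤ) = a 0 + b 0 := congrFun heq 0
      have h1 : (1:ℤ) = a 1 + b 1 := congrFun heq 1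
      have h2 : (0:ℤ) = a 2 + b 2 := congrFun heq 2
      have h3 : (0:ℤ) = a 3 + b 3 := congrFun heq 3
      omega
    · have h0 : (1:ℤ) = a 0 + b 0 := congrFun heq 0
      have h1 : (1:ℤ) = a 1 + b 1 := congrFun heq 1
      have h2 : (2:ℤ) = a 2 + b 2 := congrFun heq 2
      have h3 : (0:ℤ) = a 3 + b 3 := congrFun heq 3
      omega
    · have h0 : (0:ℤ) = a 0 + b 0 := congrFun heq 0
      have h1 : (0:ℤ) = a 1 + b 1 := congrFun heq 1
      have h2 : (0:ℤ) = a 2 + b 2 := congrFun heq 2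
      have h3 : (1:ℤ) = a 3 + b 3 := congrFun heq 3
      omega
    · have h0 : (0:ℤ) = a 0 + b 0 := congrFun heq 0
      have h1 : (2:ℤ) = a 1 + b 1 := congrFun heq 1
      have h2 : (2:ℤ) = a 2 + b 2 := congrFun heq 2
      have h3 : (1:ℤ) = a 3 + b 3 := congrFun heq 3
      omega
    · have h0 : (1:ℤ) = a 0 + b 0 := congrFun heq 0
      have h1 : (1:ℤ) = a 1 + b 1 := congrFun heq 1
      have h2 : (1:ℤ) = a 2 + b 2 := congrFun heq 2
      have h3 : (0:ℤ) = a 3 + b 3 := congrFun heq 3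
      omega
    · have h0 : (0:ℤ) = a 0 + b 0 := congrFun heq 0
      have h1 : (1:ℤ) = a 1 + b 1 := congrFun heq 1
      have h2 : (1:ℤ) = a 2 + b 2 := congrFun heq 2
      have h3 : (1:ℤ) = a 3 + b 3 := congrFun heq 3
      omega
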